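/- Let δ > 1 and V₁ > 0. Then the two-dimensional ring system admits no equilibrium of the form (r₁, 0), and the coexistence point E_C = (V₁(δ−1)/(2δ−1), δV₁/(2δ−1)), which has both coordinates strictly positive, is the unique equilibrium of the system. -/

import Mathlib

/-- For `δ > 1` and `V₁ > 0`: the two-dimensional ring system has no
equilibrium of the form `(r₁, 0)`, the coexistence point
`E_C = (V₁(δ-1)/(2δ-1), δV₁/(2δ-1))` has strictly positive coordinates,
and `E_C` is the unique equilibrium. -/
theorem stmt4 (δ V₁ : ℝ) (hδ : 1 < δ) (hV : 0 < V₁) :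
    (∀ r₁ : ℝ,
      ¬(-r₁ + max (δ * (r₁ - 0) + V₁) 0 = 0 ∧
        -(0 : ℝ) + max (δ * (0 - r₁)) 0 = 0)) ∧
    0 < V₁ * (δ - 1) / (2 * δ - 1) ∧
    0 < δ * V₁ / (2 * δ - 1) ∧
    (-(V₁ * (δ - 1) / (2 * δ - 1)) +
        max (δ * (V₁ * (δ - 1) / (2 * δ - 1) - δ * V₁ / (2 * δ - 1)) + V₁) 0 = 0 ∧
      -(δ * V₁ / (2 * δ - 1)) +
        max (δ * (δ * V₁ / (2 * δ - 1) - V₁ * (δ - 1) / (2 * δ - 1))) 0 = 0) ∧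
    ∀ r₁ r₂ : ℝ,
      -r₁ + max (δ * (r₁ - r₂) + V₁) 0 = 0 →
      -r₂ + max (δ * (r₂ - r₁)) 0 = 0 →
      r₁ = V₁ * (δ - 1) / (2 * δ - 1) ∧ r₂ = δ * V₁ / (2 * δ - 1) := by
  have hD : 0 < 2 * δ - 1 := by linarith
  have hD' : (2 * δ - 1) ≠ 0 := ne_of_gt hD
  refine ⟨?_, ?_, ?_, ⟨?_, ?_⟩, ?_⟩
  · rintro r₁ ⟨h1, _⟩
    rcases le_total (δ * (r₁ - 0) + V₁) 0 with hA | hA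
    · rw [max_eq_right hA] at h1
      have : r₁ = 0 := by linarith
      rw [this] at hA; simp at hA; linarith
    · rw [max_eq_left hA] at h1
      nlinarith
  · exact div_pos (by nlinarith) hD
  · exact div_pos (by nlinarith) hD
  · have hA : 0 ≤ δ * (V₁ * (δ - 1) / (2 * δ - 1) - δ * V₁ / (2 * δ - 1)) + V₁ := by
      rw [div_sub_div_same]
      have : V₁ * (δ - 1) - δ * V₁ = -V₁ := by ring
      rw [this]
      have h2 : δ * (-V₁ / (2 * δ - 1)) + V₁ = V₁ * (δ - 1) / (2 * δ - 1) := by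
        rw [eq_div_iff hD', add_mul, mul_assoc, div_mul_cancel₀ _ hD']; ring
      rw [h2]; exact le_of_lt (div_pos (by nlinarith) hD)
    rw [max_eq_left hA]
    have h := mul_inv_cancel₀ hD'
    ring_nf; ring_nf at h; linear_combination (-V₁) * h
  · have hB : 0 ≤ δ * (δ * V₁ / (2 * δ - 1) - V₁ * (δ - 1) / (2 * δ - 1)) := by
      rw [div_sub_div_same]
      have : δ * V₁ - V₁ * (δ - 1) = V₁ := by ring
      rw [this]; positivity
    rw [max_eq_left hB]
    field_simp; ring
  · intro r₁ r₂ h1 h2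
    rcases le_total (δ * (r₂ - r₁)) 0 with hB | hB
    · rw [max_eq_right hB] at h2
      have hr2 : r₂ = 0 := by linarith
      subst hr2
      rcases le_total (δ * (r₁ - 0) + V₁) 0 with hA | hA
      · rw [max_eq_right hA] at h1
        have : r₁ = 0 := by linarith
        rw [this] at hA; simp at hA; linarith
      · rw [max_eq_left hA] at h1
        nlinarith
    · rw [max_eq_left hB] at h2
      rcases le_total (δ * (r₁ - r₂) + V₁) 0 with hA | hA
      · rw [max_eq_right hA] at h1
        have hr1 : r₁ = 0 := by linarith
        subst hr1
        have hr2 : r₂ = 0 := by nlinarith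
        rw [hr2] at hA; simp at hA; linarith
      · rw [max_eq_left hA] at h1
        constructor
        · rw [eq_div_iff hD']
          linear_combination -h2 - (δ-1)*(h1+h2)
        · rw [eq_div_iff hD']
          linear_combination h2 - δ*(h1+h2)
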